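/- Let k ∈ [0,1), λ > 0 and s ≥ 1. If y₀ : [s,∞) → ℝ is twice continuously differentiable with y₀''(t) = λ² t^{−2k} y₀(t) for all t ≥ s, y₀(s) = 1 and y₀'(s) = 0, then y₀(t) ≥ cosh(λ(φ_k(t) − φ_k(s))) for all t ≥ s. -/

import Mathlib

open MeasureTheory Real Set

/-- `φ_k(t) = t^(1-k)/(1-k)`. -/
noncomputable def phik (k t : ℝ) : ℝ := t ^ (1 - k) / (1 - k)

/-- `A_k(t) = φ_k(t) - φ_k(1)`. -/
noncomputable def Ak (k t : ℝ) : ℝ := phik k t - phik k 1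

lemma phik_hasDerivAt {k : ℝ} (hk1 : k < 1) {u : ℝ} (hu : 0 < u) :
    HasDerivAt (phik k) (u ^ (-k)) u := by
  have hne : 1 - k ≠ 0 := by linarith
  have h := (Real.hasDerivAt_rpow_const (p := 1 - k) (Or.inl (ne_of_gt hu))).div_const (1 - k)
  have he : (1:ℝ) - k - 1 = -k := by ring
  rw [he] at h
  have heq : (1 - k) * u ^ (-k) / (1 - k) = u ^ (-k) := mul_div_cancel_left₀ _ hne
  rw [heq] at h
  unfold phik
  exact h

lemma phik_mono {k : ℝ} (hk1 : k < 1) {a b : ℝ} (ha : 0 ≤ a) (hab : a ≤ b) :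
    phik k a ≤ phik k b := by
  unfold phik
  have h1k : (0:ℝ) < 1 - k := by linarith
  exact div_le_div_of_nonneg_right (Real.rpow_le_rpow ha hab (by linarith)) h1k.le

/-- Lower bound for the solution `y₀` of `y'' = λ² t^(-2k) y`, `y(s) = 1`, `y'(s) = 0`. -/
theorem y0_lower_bound
    (k : ℝ) (hk : k ∈ Set.Ico (0:ℝ) 1) (lam : ℝ) (hlam : 0 < lam)
    (s : ℝ) (hs : 1 ≤ s)
    (y₀ : ℝ → ℝ)
    (hyd : ∀ t : ℝ, s ≤ t → DifferentiableAt ℝ y₀ t)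
    (hyd2 : ∀ t : ℝ, s ≤ t → DifferentiableAt ℝ (deriv y₀) t)
    (hyc2 : ContinuousOn (deriv (deriv y₀)) (Set.Ici s))
    (hode : ∀ t : ℝ, s ≤ t → deriv (deriv y₀) t = lam^2 * t ^ (-(2*k)) * y₀ t)
    (hy0 : y₀ s = 1) (hy0' : deriv y₀ s = 0) :
    ∀ t : ℝ, s ≤ t → Real.cosh (lam * (phik k t - phik k s)) ≤ y₀ t := by
  obtain ⟨hk0, hk1⟩ := hk
  have hs0 : (0:ℝ) < s := lt_of_lt_of_le one_pos hs
  have hyc : ContinuousOn y₀ (Set.Ici s) :=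
    fun u hu => ((hyd u hu).continuousAt).continuousWithinAt
  have hy'c : ContinuousOn (deriv y₀) (Set.Ici s) :=
    fun u hu => ((hyd2 u hu).continuousAt).continuousWithinAt
  -- Step 1: positivity of y₀ on [s, ∞)
  have hpos : ∀ t, s ≤ t → (0:ℝ) ≤ y₀ t := by
    intro T hT
    by_contra hnegT
    push_neg at hnegT
    set K : Set ℝ := Set.Icc s T ∩ y₀ ⁻¹' Set.Iic (1/2) with hKdef
    have hKclosed : IsClosed K :=
      (hyc.mono Set.Icc_subset_Ici_self).preimage_isClosed_of_isClosed isClosed_Icc isClosed_Iic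
    have hKcomp : IsCompact K := isCompact_Icc.of_isClosed_subset hKclosed Set.inter_subset_left
    have hKne : K.Nonempty :=
      ⟨T, ⟨⟨hT, le_refl T⟩, by simp only [Set.mem_preimage, Set.mem_Iic]; linarith⟩⟩
    set t₁ := sInf K with ht₁def
    have ht₁K : t₁ ∈ K := hKcomp.sInf_mem hKne
    obtain ⟨⟨hst₁, ht₁T⟩, ht₁half⟩ := ht₁K
    simp only [Set.mem_preimage, Set.mem_Iic] at ht₁half
    have hmid : ∀ u, s ≤ u → u < t₁ → 1/2 < y₀ u := by
      intro u hsu hut₁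
      by_contra hle
      push_neg at hle
      have huK : u ∈ K :=
        ⟨⟨hsu, le_trans hut₁.le ht₁T⟩, by simp only [Set.mem_preimage, Set.mem_Iic]; linarith⟩
      exact absurd (csInf_le hKcomp.bddBelow huK) (not_le.mpr hut₁)
    have hIccsub : Set.Icc s t₁ ⊆ Set.Ici s := Set.Icc_subset_Ici_self
    have hmono1 : MonotoneOn (deriv y₀) (Set.Icc s t₁) := by
      apply monotoneOn_of_deriv_nonneg (convex_Icc s t₁) (hy'c.mono hIccsub)
      · intro u hu
        rw [interior_Icc] at hu
        exact (hyd2 u (le_of_lt hu.1)).differentiableWithinAt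
      · intro u hu
        rw [interior_Icc] at hu
        rw [hode u hu.1.le]
        have h1 : (0:ℝ) < u := lt_of_lt_of_le hs0 hu.1.le
        have h2 : (0:ℝ) < y₀ u := lt_trans (by norm_num) (hmid u hu.1.le hu.2)
        positivity
    have hd1 : ∀ u ∈ Set.Icc s t₁, 0 ≤ deriv y₀ u := by
      intro u hu
      have := hmono1 (Set.left_mem_Icc.mpr hst₁) hu hu.1
      rwa [hy0'] at this
    have hmono0 : MonotoneOn y₀ (Set.Icc s t₁) := by
      apply monotoneOn_of_deriv_nonneg (convex_Icc s t₁) (hyc.mono hIccsub)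
      · intro u hu
        rw [interior_Icc] at hu
        exact (hyd u (le_of_lt hu.1)).differentiableWithinAt
      · intro u hu
        rw [interior_Icc] at hu
        exact hd1 u ⟨hu.1.le, hu.2.le⟩
    have hge1 : (1:ℝ) ≤ y₀ t₁ := by
      have := hmono0 (Set.left_mem_Icc.mpr hst₁) (Set.right_mem_Icc.mpr hst₁) hst₁
      rwa [hy0] at this
    linarith
  -- Step 2: comparison with cosh
  intro t hst
  set a : ℝ → ℝ := fun u => lam * (phik k u - phik k s) with hadef
  have ha_s : a s = 0 := by simp [hadef]
  have hanneg : ∀ u, s ≤ u → 0 ≤ a u := by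
    intro u hu
    have h1 := phik_mono hk1 (le_of_lt hs0) hu
    have h2 : 0 ≤ phik k u - phik k s := by linarith
    exact mul_nonneg hlam.le h2
  have hsinh : ∀ u, s ≤ u → 0 ≤ Real.sinh (a u) := by
    intro u hu
    rw [← Real.sinh_zero]
    exact Real.sinh_le_sinh.mpr (hanneg u hu)
  have haD : ∀ u : ℝ, 0 < u → HasDerivAt a (lam * u ^ (-k)) u := by
    intro u hu
    exact ((phik_hasDerivAt hk1 hu).sub_const (phik k s)).const_mul lam
  have hzD : ∀ u : ℝ, 0 < u →
      HasDerivAt (fun x => Real.cosh (a x)) (Real.sinh (a u) * (lam * u ^ (-k))) u :=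
    fun u hu => (haD u hu).cosh
  set g : ℝ → ℝ := fun u => lam * u ^ (-k) * Real.sinh (a u) with hgdef
  have hgD : ∀ u : ℝ, 0 < u →
      HasDerivAt g (lam * (-k * u ^ (-k - 1)) * Real.sinh (a u)
        + lam * u ^ (-k) * (Real.cosh (a u) * (lam * u ^ (-k)))) u := by
    intro u hu
    have h1 : HasDerivAt (fun x : ℝ => lam * x ^ (-k)) (lam * (-k * u ^ (-k - 1))) u :=
      (Real.hasDerivAt_rpow_const (p := -k) (Or.inl hu.ne')).const_mul lam
    have h2 : HasDerivAt (fun x => Real.sinh (a x)) (Real.cosh (a u) * (lam * u ^ (-k))) u :=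
      (haD u hu).sinh
    exact h1.mul h2
  set w : ℝ → ℝ := fun u => deriv y₀ u * Real.cosh (a u) - y₀ u * g u with hwdef
  have hwD : ∀ u : ℝ, s ≤ u →
      HasDerivAt w (y₀ u * (lam * k * u ^ (-k - 1)) * Real.sinh (a u)) u := by
    intro u hsu
    have hu : (0:ℝ) < u := lt_of_lt_of_le hs0 hsu
    have hy' : HasDerivAt (deriv y₀) (deriv (deriv y₀) u) u := (hyd2 u hsu).hasDerivAt
    have hy : HasDerivAt y₀ (deriv y₀ u) u := (hyd u hsu).hasDerivAt
    have hraw := (hy'.mul (hzD u hu)).sub (hy.mul (hgD u hu))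
    refine hraw.congr_deriv ?_
    rw [hode u hsu]
    have hexp : -(2*k) = -k + -k := by ring
    rw [hexp, Real.rpow_add hu]
    simp only [hgdef]
    ring
  have hw_s : w s = 0 := by
    simp [hwdef, hgdef, ha_s, hy0', Real.sinh_zero]
  have hwmono : MonotoneOn w (Set.Icc s t) := by
    apply monotoneOn_of_deriv_nonneg (convex_Icc s t)
    · exact fun u hu => ((hwD u hu.1).continuousAt).continuousWithinAt
    · intro u hu
      rw [interior_Icc] at hu
      exact (hwD u hu.1.le).differentiableAt.differentiableWithinAt
    · intro u hu
      rw [interior_Icc] at hu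
      rw [(hwD u hu.1.le).deriv]
      have hu0 : (0:ℝ) < u := lt_of_lt_of_le hs0 hu.1.le
      have h1 : 0 ≤ y₀ u := hpos u hu.1.le
      have h2 : (0:ℝ) ≤ lam * k * u ^ (-k - 1) := by positivity
      exact mul_nonneg (mul_nonneg h1 h2) (hsinh u hu.1.le)
  have hw_nonneg : ∀ u ∈ Set.Icc s t, 0 ≤ w u := by
    intro u hu
    have := hwmono (Set.left_mem_Icc.mpr hst) hu hu.1
    rwa [hw_s] at this
  set q : ℝ → ℝ := fun u => y₀ u / Real.cosh (a u) with hqdef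
  have hqD : ∀ u : ℝ, s ≤ u → HasDerivAt q (w u / (Real.cosh (a u)) ^ 2) u := by
    intro u hsu
    have hu : (0:ℝ) < u := lt_of_lt_of_le hs0 hsu
    have hy : HasDerivAt y₀ (deriv y₀ u) u := (hyd u hsu).hasDerivAt
    have hq := hy.div (hzD u hu) (Real.cosh_pos (x := a u)).ne'
    refine hq.congr_deriv ?_
    simp only [hwdef, hgdef]
    ring
  have hqmono : MonotoneOn q (Set.Icc s t) := by
    apply monotoneOn_of_deriv_nonneg (convex_Icc s t)
    · exact fun u hu => ((hqD u hu.1).continuousAt).continuousWithinAt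
    · intro u hu
      rw [interior_Icc] at hu
      exact (hqD u hu.1.le).differentiableAt.differentiableWithinAt
    · intro u hu
      rw [interior_Icc] at hu
      rw [(hqD u hu.1.le).deriv]
      exact div_nonneg (hw_nonneg u ⟨hu.1.le, hu.2.le⟩) (sq_nonneg _)
  have hq1 : q s ≤ q t := hqmono (Set.left_mem_Icc.mpr hst) (Set.right_mem_Icc.mpr hst) hst
  have hqs : q s = 1 := by simp [hqdef, ha_s, hy0]
  rw [hqs, hqdef] at hq1
  have hcosh : (0:ℝ) < Real.cosh (a t) := Real.cosh_pos (a t)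
  have := (one_le_div hcosh).mp hq1
  simpa [hadef] using this
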